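/- For the disjunctive sequent calculus (L(P_D),⊢_D) associated with an algebraic L-domain (D,≤): (1) a formula φ is a tautology iff φ̂ = D; (2) φ is a contradiction iff φ̂ = ∅; (3) φ is satisfiable iff φ̂ = ↑A for some nonempty pairwise inconsistent subset A of K*(D); (4) two formulae φ and ψ are logically equivalent iff φ̂ = ψ̂; (5) for any finite {x_1,…,x_n} ⊆ K*(D), the formula ↑x_1 ∧ ↑x_2 ∧ … ∧ ↑x_n is a conjunction iff {x_1,…,x_n} has an upper bound in D. -/

import Mathlib

/- ## Syntax of disjunctive propositional logic -/

/-- Raw formulae over a set `P` of atomic formulae: atoms, the constants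
`T` and `F`, binary conjunction, and disjunction of an arbitrary family
of formulae. -/
inductive Fm (P : Type) : Type 1 where
  | atom : P → Fm P
  | tt : Fm P
  | ff : Fm P
  | conj : Fm P → Fm P → Fm P
  | disj : {ι : Type} → (ι → Fm P) → Fm P

namespace Fm

/-- The valid sequents of the disjunctive sequent calculus generated from the
disjunctive basis `(P, A)`, where `A` is the set of atomic disjointness
assumptions `p₁,…,pₙ ⊢ F` (each given by a finite nonempty set of atoms). -/
inductive Seq {P : Type} (A : Set (Set P)) : Set (Fm P) → Fm P → Prop where
  | ax {s : Set P} : s ∈ A → s.Finite → s.Nonempty → Seq A (Fm.atom '' s) Fm.ff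
  | id (φ : Fm P) : Seq A {φ} φ
  | lwk {Γ : Set (Fm P)} {ψ : Fm P} (φ : Fm P) : Seq A Γ ψ → Seq A (insert φ Γ) ψ
  | cut {Γ Δ : Set (Fm P)} {φ ψ : Fm P} :
      Seq A Γ φ → Seq A (insert φ Δ) ψ → Seq A (Γ ∪ Δ) ψ
  | lf (φ : Fm P) : Seq A {Fm.ff} φ
  | rt : Seq A ∅ Fm.tt
  | landl {Γ : Set (Fm P)} {φ ψ θ : Fm P} :
      Seq A (insert φ (insert ψ Γ)) θ → Seq A (insert (Fm.conj φ ψ) Γ) θ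
  | randr {Γ Δ : Set (Fm P)} {φ ψ : Fm P} :
      Seq A Γ φ → Seq A Δ ψ → Seq A (Γ ∪ Δ) (Fm.conj φ ψ)
  | ldisj {Γ : Set (Fm P)} {θ : Fm P} {ι : Type} {f : ι → Fm P} :
      (∀ i, Seq A (insert (f i) Γ) θ) → (∀ i j, i ≠ j → Seq A {f i, f j} Fm.ff) →
      Seq A (insert (Fm.disj f) Γ) θ
  | rdisj {Γ : Set (Fm P)} {ι : Type} {f : ι → Fm P} (i₀ : ι) :
      Seq A Γ (f i₀) → (∀ i j, i ≠ j → Seq A {f i, f j} Fm.ff) →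
      Seq A Γ (Fm.disj f)

/-- The wellformed formulae `L(P)` generated from the disjunctive basis
`(P, A)`: disjunctions are only formed over provably pairwise disjoint
families. -/
inductive WF {P : Type} (A : Set (Set P)) : Fm P → Prop where
  | atom (p : P) : WF A (Fm.atom p)
  | tt : WF A Fm.tt
  | ff : WF A Fm.ff
  | conj {φ ψ : Fm P} : WF A φ → WF A ψ → WF A (Fm.conj φ ψ)
  | disj {ι : Type} {f : ι → Fm P} : (∀ i, WF A (f i)) →
      (∀ i j, i ≠ j → Seq A {f i, f j} Fm.ff) → WF A (Fm.disj f)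

end Fm

/- ## Generic notions relative to a wellformedness predicate `W` (the set
`L(P)` of formulae) and an entailment relation `E` (the valid sequents). -/

section Defs

variable {P Q R : Type}

/-- `φ` is a tautology: `T ⊢ φ` is valid. -/
def Taut (W : Fm P → Prop) (E : Set (Fm P) → Fm P → Prop) (φ : Fm P) : Prop :=
  W φ ∧ E {Fm.tt} φ

/-- `φ` is a contradiction: `φ ⊢ F` is valid. -/
def Contra (W : Fm P → Prop) (E : Set (Fm P) → Fm P → Prop) (φ : Fm P) : Prop :=
  W φ ∧ E {φ} Fm.ff

/-- `φ` is satisfiable: neither a tautology nor a contradiction. -/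
def Satisfiable (W : Fm P → Prop) (E : Set (Fm P) → Fm P → Prop) (φ : Fm P) : Prop :=
  W φ ∧ ¬ Taut W E φ ∧ ¬ Contra W E φ

/-- Built up from atomic formulae only by conjunctive connectives. -/
inductive ConjShape {P : Type} : Fm P → Prop where
  | atom (p : P) : ConjShape (Fm.atom p)
  | conj {φ ψ : Fm P} : ConjShape φ → ConjShape ψ → ConjShape (Fm.conj φ ψ)

/-- A conjunction: a satisfiable formula built up from atomic formulae only
by conjunctive connectives. -/
def IsConjForm (W : Fm P → Prop) (E : Set (Fm P) → Fm P → Prop) (φ : Fm P) : Prop :=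
  ConjShape φ ∧ Satisfiable W E φ

/-- `X[⊢] = {φ ∈ L(P) : Γ ⊢ φ is valid for some finite Γ ⊆ X}`. -/
def entClose (W : Fm P → Prop) (E : Set (Fm P) → Fm P → Prop) (X : Set (Fm P)) :
    Set (Fm P) :=
  {φ | W φ ∧ ∃ Γ : Set (Fm P), Γ ⊆ X ∧ Γ.Finite ∧ E Γ φ}

/-- A logical state: a nonempty proper subset `S` of `L(P)` such that
(S1) any flat formula `⋁̇ᵢ μᵢ` in `S` has some disjunct `μᵢ₀ ∈ S`, and
(S2) `S[⊢] ⊆ S`. -/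
structure IsLogicalState (W : Fm P → Prop) (E : Set (Fm P) → Fm P → Prop)
    (S : Set (Fm P)) : Prop where
  nonempty : S.Nonempty
  subset : S ⊆ {φ | W φ}
  proper : S ≠ {φ | W φ}
  s1 : ∀ (ι : Type) (f : ι → Fm P), (∀ i, IsConjForm W E (f i)) →
      (∀ i j, i ≠ j → E {f i, f j} Fm.ff) → Satisfiable W E (Fm.disj f) →
      Fm.disj f ∈ S → ∃ i, f i ∈ S
  s2 : entClose W E S ⊆ S

/-- `[X]_S`: the intersection of all logical states `T` with `X ⊆ T ⊆ S`. -/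
def clIn (W : Fm P → Prop) (E : Set (Fm P) → Fm P → Prop) (X S : Set (Fm P)) :
    Set (Fm P) :=
  ⋂₀ {T | IsLogicalState W E T ∧ X ⊆ T ∧ T ⊆ S}

/-- An irreducible conjunction. -/
def IsIrredConj (W : Fm P → Prop) (E : Set (Fm P) → Fm P → Prop) (μ : Fm P) : Prop :=
  IsConjForm W E μ ∧ ∀ (ι : Type) (f : ι → Fm P), (∀ i, W (f i)) →
    (∀ i j, i ≠ j → E {f i, f j} Fm.ff) → E {μ} (Fm.disj f) → ∃ i, E {μ} (f i)

/-- An expressive disjunctive sequent calculus: every satisfiable formula is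
logically equivalent to an irreducible flat formula (from below disjunctwise). -/
def Expressive (W : Fm P → Prop) (E : Set (Fm P) → Fm P → Prop) : Prop :=
  ∀ ψ : Fm P, Satisfiable W E ψ → ∃ (ι : Type) (f : ι → Fm P),
    (∀ i, IsIrredConj W E (f i)) ∧ (∀ i j, i ≠ j → E {f i, f j} Fm.ff) ∧
    Satisfiable W E (Fm.disj f) ∧ E {ψ} (Fm.disj f) ∧ ∀ i, E {f i} ψ

/-- `Θ[X] = {φ ∈ L(Q) : (μ,φ) ∈ Θ for some μ ∈ X ∩ IC(P)}`. -/
def ThetaImage (WP : Fm P → Prop) (EP : Set (Fm P) → Fm P → Prop)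
    (Θ : Fm P → Fm Q → Prop) (X : Set (Fm P)) : Set (Fm Q) :=
  {φ | ∃ μ ∈ X, IsIrredConj WP EP μ ∧ Θ μ φ}

/-- A consequence relation `Θ ⊆ IC(P) × L(Q)` satisfying (R1), (R2), (R3). -/
def IsConsRel (WP : Fm P → Prop) (EP : Set (Fm P) → Fm P → Prop)
    (WQ : Fm Q → Prop) (EQ : Set (Fm Q) → Fm Q → Prop)
    (Θ : Fm P → Fm Q → Prop) : Prop :=
  (∀ μ ψ, Θ μ ψ → IsIrredConj WP EP μ ∧ WQ ψ) ∧
  (∀ μ ν ψ, IsIrredConj WP EP μ → EP {μ} ν → Θ ν ψ → Θ μ ψ) ∧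
  (∀ μ φ ψ, WQ ψ → Θ μ φ → EQ {φ} ψ → Θ μ ψ) ∧
  (∀ μ ψ, Θ μ ψ → ∃ ν, IsIrredConj WQ EQ ν ∧ Θ μ ν ∧ EQ {ν} ψ)

/-- Composition of consequence relations. -/
def consRelComp (WQ : Fm Q → Prop) (EQ : Set (Fm Q) → Fm Q → Prop)
    (Θ : Fm P → Fm Q → Prop) (Θ' : Fm Q → Fm R → Prop) : Fm P → Fm R → Prop :=
  fun μ φ => ∃ ν, IsIrredConj WQ EQ ν ∧ Θ μ ν ∧ Θ' ν φ

/-- The identity consequence relation `(μ,φ) ∈ id_P ↔ φ ∈ {μ}[⊢_P]`. -/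
def consRelId (W : Fm P → Prop) (E : Set (Fm P) → Fm P → Prop) : Fm P → Fm P → Prop :=
  fun μ φ => IsIrredConj W E μ ∧ φ ∈ entClose W E {μ}

end Defs

/-- The poset of logical states of the calculus generated by the basis `(P,A)`,
ordered by set inclusion. -/
abbrev LSt (P : Type) (A : Set (Set P)) : Type 1 :=
  {S : Set (Fm P) // IsLogicalState (Fm.WF A) (Fm.Seq A) S}

/- ## Domain-theoretic notions -/

/-- A compact element of a poset (w.r.t. suprema of directed subsets). -/
def IsCompactElt {α : Type*} [PartialOrder α] (x : α) : Prop :=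
  ∀ d : Set α, d.Nonempty → DirectedOn (· ≤ ·) d → ∀ s, IsLUB d s → x ≤ s →
    ∃ y ∈ d, x ≤ y

/-- An algebraic domain: a pointed dcpo in which every element is the
supremum of the directed set of compact elements below it. -/
def IsAlgebraicDomain (α : Type*) [PartialOrder α] : Prop :=
  (∃ b : α, ∀ x, b ≤ x) ∧
  (∀ d : Set α, d.Nonempty → DirectedOn (· ≤ ·) d → ∃ s, IsLUB d s) ∧
  (∀ x : α, ({k : α | IsCompactElt k ∧ k ≤ x}).Nonempty ∧
    DirectedOn (· ≤ ·) {k : α | IsCompactElt k ∧ k ≤ x} ∧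
    IsLUB {k : α | IsCompactElt k ∧ k ≤ x} x)

/-- An algebraic L-domain: an algebraic domain in which every principal ideal
`↓x` is a complete lattice (every subset of `↓x` has a supremum in `↓x`). -/
def IsAlgebraicLDomain (α : Type*) [PartialOrder α] : Prop :=
  IsAlgebraicDomain α ∧
  ∀ x : α, ∀ T : Set α, T ⊆ Set.Iic x → ∃ s ∈ Set.Iic x,
    (∀ t ∈ T, t ≤ s) ∧ ∀ u ∈ Set.Iic x, (∀ t ∈ T, t ≤ u) → s ≤ u

/- ## The calculus associated with an algebraic L-domain -/

/-- The atomic formulae of the associated calculus: (upsets of) elements of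
`K*(D)`, the compact non-bottom elements. -/
abbrev LAtom (D : Type) [PartialOrder D] : Type := {x : D // IsCompactElt x ∧ ¬ IsBot x}

/-- The interpretation `φ̂ ⊆ D` of a formula: `F, T, ∧, ⋁̇` become
`∅, D`, intersection and union. -/
def hat {D : Type} [PartialOrder D] : Fm (LAtom D) → Set D
  | Fm.atom x => Set.Ici x.val
  | Fm.tt => Set.univ
  | Fm.ff => ∅
  | Fm.conj φ ψ => hat φ ∩ hat ψ
  | Fm.disj f => ⋃ i, hat (f i)

/-- The formulae `L(P_D)` of the associated calculus: disjunctions only of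
families with pairwise disjoint interpretations. -/
inductive DWF {D : Type} [PartialOrder D] : Fm (LAtom D) → Prop where
  | atom (p : LAtom D) : DWF (Fm.atom p)
  | tt : DWF Fm.tt
  | ff : DWF Fm.ff
  | conj {φ ψ : Fm (LAtom D)} : DWF φ → DWF ψ → DWF (Fm.conj φ ψ)
  | disj {ι : Type} {f : ι → Fm (LAtom D)} : (∀ i, DWF (f i)) →
      (∀ i j, i ≠ j → hat (f i) ∩ hat (f j) = ∅) → DWF (Fm.disj f)

/-- Validity in the associated calculus: `ψ₁,…,ψₙ ⊢_D φ` iff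
`ψ̂₁ ∩ … ∩ ψ̂ₙ ⊆ φ̂`. -/
def DSeq {D : Type} [PartialOrder D] (Γ : Set (Fm (LAtom D))) (φ : Fm (LAtom D)) : Prop :=
  ⋂₀ (hat '' Γ) ⊆ hat φ

/-- A decomposable subset of `D`: the upper set `↑A` of a pairwise
inconsistent set `A` of compact elements. -/
def IsDecomposable {D : Type} [PartialOrder D] (U : Set D) : Prop :=
  ∃ A : Set D, (∀ a ∈ A, IsCompactElt a) ∧
    (∀ a ∈ A, ∀ b ∈ A, a ≠ b → Set.Ici a ∩ Set.Ici b = ∅) ∧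
    U = ⋃ a ∈ A, Set.Ici a

/-- The conjunction `↑x₁ ∧ ↑x₂ ∧ … ∧ ↑xₙ` of a nonempty list of atoms. -/
def bigConj {P : Type} (x : P) (l : List P) : Fm P :=
  l.foldl (fun φ y => Fm.conj φ (Fm.atom y)) (Fm.atom x)

/- ## Auxiliary lemmas -/

section Aux11

variable {D : Type} [PartialOrder D]

/-- `m` is the supremum of `{a,b}` in the principal ideal `↓x`. -/
def IsLocSup (a b x m : D) : Prop :=
  a ≤ m ∧ b ≤ m ∧ m ≤ x ∧ ∀ u, u ≤ x → a ≤ u → b ≤ u → m ≤ u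

lemma locSup_exists (hD : IsAlgebraicLDomain D) {a b x : D} (ha : a ≤ x) (hb : b ≤ x) :
    ∃ m, IsLocSup a b x m := by
  obtain ⟨s, hsx, hub, hlst⟩ := hD.2 x {a, b} (by
    intro t ht
    rcases ht with rfl | ht
    · exact ha
    · simp only [Set.mem_singleton_iff] at ht; subst ht; exact hb)
  exact ⟨s, hub a (by simp), hub b (by simp), hsx,
    fun u hux hau hbu => hlst u hux (by
      intro t ht
      rcases ht with rfl | ht
      · exact hau
      · simp only [Set.mem_singleton_iff] at ht; subst ht; exact hbu)⟩

lemma locSup_unique {a b x m₁ m₂ : D} (h₁ : IsLocSup a b x m₁) (h₂ : IsLocSup a b x m₂) :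
    m₁ = m₂ :=
  le_antisymm (h₁.2.2.2 m₂ h₂.2.2.1 h₂.1 h₂.2.1) (h₂.2.2.2 m₁ h₁.2.2.1 h₁.1 h₁.2.1)

/-- The local sup transfers to any larger principal ideal containing it. -/
lemma locSup_transfer (hD : IsAlgebraicLDomain D) {a b x s m : D}
    (h : IsLocSup a b x m) (hms : m ≤ s) (has : a ≤ s) (hbs : b ≤ s) :
    IsLocSup a b s m := by
  obtain ⟨m', hm'⟩ := locSup_exists hD has hbs
  have h1 : m' ≤ m := hm'.2.2.2 m hms h.1 h.2.1
  have h2 : m ≤ m' := h.2.2.2 m' (le_trans h1 h.2.2.1) hm'.1 hm'.2.1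
  have : m = m' := le_antisymm h2 h1
  rw [this]; exact hm'

lemma locSup_compact (hD : IsAlgebraicLDomain D) {a b x m : D}
    (ha : IsCompactElt a) (hb : IsCompactElt b) (h : IsLocSup a b x m) :
    IsCompactElt m := by
  intro d hd hdir s hlub hms
  have has : a ≤ s := le_trans h.1 hms
  have hbs : b ≤ s := le_trans h.2.1 hms
  obtain ⟨d₁, hd₁, had₁⟩ := ha d hd hdir s hlub has
  obtain ⟨d₂, hd₂, hbd₂⟩ := hb d hd hdir s hlub hbs
  obtain ⟨d₃, hd₃, h13, h23⟩ := hdir d₁ hd₁ d₂ hd₂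
  have had₃ : a ≤ d₃ := le_trans had₁ h13
  have hbd₃ : b ≤ d₃ := le_trans hbd₂ h23
  obtain ⟨m'', hm''⟩ := locSup_exists hD had₃ hbd₃
  have hms' : IsLocSup a b s m := locSup_transfer hD h hms has hbs
  have hd₃s : d₃ ≤ s := hlub.1 hd₃
  have : m ≤ m'' := hms'.2.2.2 m'' (le_trans hm''.2.2.1 hd₃s) hm''.1 hm''.2.1
  exact ⟨d₃, hd₃, le_trans this hm''.2.2.1⟩

/-- A decomposition of a subset of `D`. -/
def Decomp (A : Set D) (U : Set D) : Prop :=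
  (∀ a ∈ A, IsCompactElt a) ∧
  (∀ a ∈ A, ∀ b ∈ A, a ≠ b → Set.Ici a ∩ Set.Ici b = ∅) ∧
  U = ⋃ a ∈ A, Set.Ici a

lemma bot_compact (hD : IsAlgebraicLDomain D) {b : D} (hb : ∀ x, b ≤ x) :
    IsCompactElt b := by
  intro d hd _ s _ _
  obtain ⟨y, hy⟩ := hd
  exact ⟨y, hy, hb y⟩

lemma disj_of_mem {a b : D} {z : D} (h : Set.Ici a ∩ Set.Ici b = ∅)
    (hz1 : a ≤ z) (hz2 : b ≤ z) : False := by
  have : z ∈ Set.Ici a ∩ Set.Ici b := ⟨hz1, hz2⟩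
  rw [h] at this; exact this

lemma decomp_inter (hD : IsAlgebraicLDomain D) {A B : Set D} {U V : Set D}
    (hA : Decomp A U) (hB : Decomp B V) : ∃ C, Decomp C (U ∩ V) := by
  refine ⟨{m | ∃ a ∈ A, ∃ b ∈ B, ∃ x, IsLocSup a b x m}, ?_, ?_, ?_⟩
  · rintro m ⟨a, haA, b, hbB, x, hm⟩
    exact locSup_compact hD (hA.1 a haA) (hB.1 b hbB) hm
  · rintro m₁ ⟨a₁, ha₁, b₁, hb₁, x₁, hm₁⟩ m₂ ⟨a₂, ha₂, b₂, hb₂, x₂, hm₂⟩ hne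
    by_contra hcon
    obtain ⟨z, hz₁, hz₂⟩ := Set.nonempty_iff_ne_empty.2 hcon
    have haz₁ : a₁ ≤ z := le_trans hm₁.1 hz₁
    have haz₂ : a₂ ≤ z := le_trans hm₂.1 hz₂
    have hbz₁ : b₁ ≤ z := le_trans hm₁.2.1 hz₁
    have hbz₂ : b₂ ≤ z := le_trans hm₂.2.1 hz₂
    have hae : a₁ = a₂ := by
      by_contra hne'
      exact disj_of_mem (hA.2.1 a₁ ha₁ a₂ ha₂ hne') haz₁ haz₂
    have hbe : b₁ = b₂ := by
      by_contra hne'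
      exact disj_of_mem (hB.2.1 b₁ hb₁ b₂ hb₂ hne') hbz₁ hbz₂
    subst hae; subst hbe
    exact hne (locSup_unique (locSup_transfer hD hm₁ hz₁ haz₁ hbz₁)
      (locSup_transfer hD hm₂ hz₂ haz₂ hbz₂))
  · ext z
    simp only [hA.2.2, hB.2.2, Set.mem_inter_iff, Set.mem_iUnion, Set.mem_Ici,
      Set.mem_setOf_eq, exists_prop]
    constructor
    · rintro ⟨⟨a, haA, haz⟩, ⟨b, hbB, hbz⟩⟩
      obtain ⟨m, hm⟩ := locSup_exists hD haz hbz
      exact ⟨m, ⟨a, haA, b, hbB, z, hm⟩, hm.2.2.1⟩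
    · rintro ⟨m, ⟨a, haA, b, hbB, x, hm⟩, hmz⟩
      exact ⟨⟨a, haA, le_trans hm.1 hmz⟩, ⟨b, hbB, le_trans hm.2.1 hmz⟩⟩

/-- Every wellformed formula has a decomposable interpretation. -/
lemma decomp_hat (hD : IsAlgebraicLDomain D) :
    ∀ φ : Fm (LAtom D), DWF φ → ∃ A : Set D, Decomp A (hat φ) := by
  intro φ hφ
  induction hφ with
  | atom p =>
      refine ⟨{p.val}, ?_, ?_, ?_⟩
      · rintro a rfl; exact p.2.1
      · rintro a rfl b rfl hne; exact absurd rfl hne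
      · simp [hat]
  | tt =>
      obtain ⟨b, hb⟩ := hD.1.1
      refine ⟨{b}, ?_, ?_, ?_⟩
      · rintro a rfl; exact bot_compact hD hb
      · rintro a rfl c rfl hne; exact absurd rfl hne
      · simp only [hat, Set.iUnion_iUnion_eq_left, Set.mem_singleton_iff]
        exact (Set.eq_univ_of_forall fun z => hb z).symm
  | ff => exact ⟨∅, by simp, by simp, by simp [hat]⟩
  | conj h1 h2 ih1 ih2 =>
      obtain ⟨A, hA⟩ := ih1
      obtain ⟨B, hB⟩ := ih2
      obtain ⟨C, hC⟩ := decomp_inter hD hA hB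
      exact ⟨C, hC⟩
  | @disj ι f hwf hdisj ih =>
      choose A hA using ih
      refine ⟨⋃ i, A i, ?_, ?_, ?_⟩
      · rintro a ha
        obtain ⟨i, hai⟩ := Set.mem_iUnion.1 ha
        exact (hA i).1 a hai
      · rintro a ha b hb hne
        obtain ⟨i, hai⟩ := Set.mem_iUnion.1 ha
        obtain ⟨j, hbj⟩ := Set.mem_iUnion.1 hb
        by_cases hij : i = j
        · subst hij; exact (hA i).2.1 a hai b hbj hne
        · by_contra hcon
          obtain ⟨z, hz₁, hz₂⟩ := Set.nonempty_iff_ne_empty.2 hcon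
          have hz1 : z ∈ hat (f i) := by
            rw [(hA i).2.2]; exact Set.mem_biUnion hai hz₁
          have hz2 : z ∈ hat (f j) := by
            rw [(hA j).2.2]; exact Set.mem_biUnion hbj hz₂
          have : z ∈ hat (f i) ∩ hat (f j) := ⟨hz1, hz2⟩
          rw [hdisj i j hij] at this; exact this
      · show (⋃ i, hat (f i)) = _
        ext z
        simp only [Set.mem_iUnion, Set.mem_Ici, exists_prop]
        constructor
        · rintro ⟨i, hzi⟩
          rw [(hA i).2.2] at hzi
          obtain ⟨a, haA, haz⟩ := by simpa using hzi
          exact ⟨a, ⟨i, haA⟩, haz⟩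
        · rintro ⟨a, ⟨i, hai⟩, haz⟩
          refine ⟨i, ?_⟩
          rw [(hA i).2.2]
          exact Set.mem_biUnion hai haz

lemma DSeq_singleton (φ ψ : Fm (LAtom D)) : DSeq {φ} ψ ↔ hat φ ⊆ hat ψ := by
  unfold DSeq
  rw [Set.image_singleton, Set.sInter_singleton]

lemma hat_foldl (l : List (LAtom D)) (φ : Fm (LAtom D)) :
    hat (l.foldl (fun φ y => Fm.conj φ (Fm.atom y)) φ) =
      hat φ ∩ {b | ∀ y ∈ l, y.val ≤ b} := by
  induction l generalizing φ with
  | nil => simp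
  | cons y l ih =>
      rw [List.foldl_cons, ih]
      ext b
      simp only [hat, Set.mem_inter_iff, Set.mem_Ici, Set.mem_setOf_eq, List.mem_cons]
      constructor
      · rintro ⟨⟨h1, h2⟩, h3⟩
        exact ⟨h1, fun z hz => by rcases hz with rfl | hz; exacts [h2, h3 z hz]⟩
      · rintro ⟨h1, h2⟩
        exact ⟨⟨h1, h2 y (Or.inl rfl)⟩, fun z hz => h2 z (Or.inr hz)⟩

lemma conjShape_foldl (l : List (LAtom D)) (φ : Fm (LAtom D)) (h : ConjShape φ) :
    ConjShape (l.foldl (fun φ y => Fm.conj φ (Fm.atom y)) φ) := by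
  induction l generalizing φ with
  | nil => exact h
  | cons y l ih => exact ih _ (ConjShape.conj h (ConjShape.atom y))

lemma dwf_foldl (l : List (LAtom D)) (φ : Fm (LAtom D)) (h : DWF φ) :
    DWF (l.foldl (fun φ y => Fm.conj φ (Fm.atom y)) φ) := by
  induction l generalizing φ with
  | nil => exact h
  | cons y l ih => exact ih _ (DWF.conj h (DWF.atom y))

end Aux11

/-- In the calculus associated with an algebraic L-domain `D`:
(1) `φ` is a tautology iff `φ̂ = D`; (2) `φ` is a contradiction iff `φ̂ = ∅`;
(3) `φ` is satisfiable iff `φ̂ = ↑A` for a nonempty pairwise inconsistent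
`A ⊆ K*(D)`; (4) `φ, ψ` are logically equivalent iff `φ̂ = ψ̂`;
(5) `↑x₁ ∧ … ∧ ↑xₙ` is a conjunction iff `{x₁,…,xₙ}` has an upper bound. -/
theorem stmt11 (D : Type) [PartialOrder D] (hD : IsAlgebraicLDomain D) :
    (∀ φ : Fm (LAtom D), DWF φ →
      (Taut DWF DSeq φ ↔ hat φ = (Set.univ : Set D))) ∧
    (∀ φ : Fm (LAtom D), DWF φ →
      (Contra DWF DSeq φ ↔ hat φ = (∅ : Set D))) ∧
    (∀ φ : Fm (LAtom D), DWF φ →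
      (Satisfiable DWF DSeq φ ↔ ∃ A : Set D, A.Nonempty ∧
        (∀ a ∈ A, IsCompactElt a ∧ ¬ IsBot a) ∧
        (∀ a ∈ A, ∀ b ∈ A, a ≠ b → Set.Ici a ∩ Set.Ici b = ∅) ∧
        hat φ = ⋃ a ∈ A, Set.Ici a)) ∧
    (∀ φ ψ : Fm (LAtom D), DWF φ → DWF ψ →
      ((DSeq {φ} ψ ∧ DSeq {ψ} φ) ↔ hat φ = hat ψ)) ∧
    (∀ (x : LAtom D) (l : List (LAtom D)),
      (IsConjForm DWF DSeq (bigConj x l) ↔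
        ∃ b : D, ∀ y ∈ x :: l, (y : LAtom D).val ≤ b)) := by
  obtain ⟨bot, hbot⟩ := hD.1.1
  have hat_tt : hat (Fm.tt : Fm (LAtom D)) = Set.univ := rfl
  have hat_ff : hat (Fm.ff : Fm (LAtom D)) = (∅ : Set D) := rfl
  have hTaut : ∀ φ : Fm (LAtom D), DWF φ → (Taut DWF DSeq φ ↔ hat φ = Set.univ) := by
    intro φ hφ
    constructor
    · rintro ⟨-, h⟩
      rw [DSeq_singleton, hat_tt] at h
      exact Set.eq_univ_of_univ_subset h
    · intro h
      exact ⟨hφ, by rw [DSeq_singleton, hat_tt, h]⟩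
  have hContra : ∀ φ : Fm (LAtom D), DWF φ → (Contra DWF DSeq φ ↔ hat φ = ∅) := by
    intro φ hφ
    constructor
    · rintro ⟨-, h⟩
      rw [DSeq_singleton, hat_ff] at h
      exact Set.subset_eq_empty h rfl
    · intro h
      exact ⟨hφ, by rw [DSeq_singleton, hat_ff, h]⟩
  refine ⟨hTaut, hContra, ?_, ?_, ?_⟩
  · -- (3) satisfiability
    intro φ hφ
    constructor
    · rintro ⟨-, hnt, hnc⟩
      obtain ⟨A, hA⟩ := decomp_hat hD φ hφ
      have hne : hat φ ≠ ∅ := fun h => hnc ((hContra φ hφ).2 h)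
      have hnu : hat φ ≠ Set.univ := fun h => hnt ((hTaut φ hφ).2 h)
      refine ⟨A, ?_, ?_, hA.2.1, hA.2.2⟩
      · rcases Set.eq_empty_or_nonempty A with rfl | hAne
        · exact absurd (by simp [hA.2.2]) hne
        · exact hAne
      · intro a ha
        refine ⟨hA.1 a ha, fun hb => hnu ?_⟩
        apply Set.eq_univ_of_univ_subset
        intro z _
        rw [hA.2.2]
        exact Set.mem_biUnion ha (hb z)
    · rintro ⟨A, ⟨a₀, ha₀⟩, hk, hpd, heq⟩
      refine ⟨hφ, ?_, ?_⟩
      · intro ht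
        have := (hTaut φ hφ).1 ht
        have hbotmem : bot ∈ hat φ := by rw [this]; trivial
        rw [heq] at hbotmem
        obtain ⟨a, ha, hab⟩ := by simpa using hbotmem
        exact (hk a ha).2 (fun z => le_trans hab (hbot z))
      · intro hc
        have := (hContra φ hφ).1 hc
        have : a₀ ∈ hat φ := by rw [heq]; exact Set.mem_biUnion ha₀ le_rfl
        rw [(hContra φ hφ).1 hc] at this
        exact this
  · -- (4) logical equivalence
    intro φ ψ _ _
    rw [DSeq_singleton, DSeq_singleton]
    exact ⟨fun h => le_antisymm h.1 h.2, fun h => ⟨h.le, h.ge⟩⟩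
  · -- (5) conjunctions
    intro x l
    have hshape : ConjShape (bigConj x l) := conjShape_foldl l _ (ConjShape.atom x)
    have hwf : DWF (bigConj x l) := dwf_foldl l _ (DWF.atom x)
    have hhat : hat (bigConj x l) = {b | ∀ y ∈ x :: l, (y : LAtom D).val ≤ b} := by
      unfold bigConj
      rw [hat_foldl]
      ext b
      simp only [hat, Set.mem_inter_iff, Set.mem_Ici, Set.mem_setOf_eq, List.mem_cons]
      constructor
      · rintro ⟨h1, h2⟩ z hz
        rcases hz with rfl | hz
        exacts [h1, h2 z hz]
      · intro h
        exact ⟨h x (Or.inl rfl), fun z hz => h z (Or.inr hz)⟩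
    have hnbot : bot ∉ hat (bigConj x l) := by
      rw [hhat]
      intro h
      exact x.2.2 (fun z => le_trans (h x List.mem_cons_self) (hbot z))
    constructor
    · rintro ⟨-, -, -, hnc⟩
      by_contra hub
      apply hnc
      refine ⟨hwf, ?_⟩
      rw [DSeq_singleton, hat_ff]
      intro b hb
      rw [hhat] at hb
      exact absurd ⟨b, hb⟩ hub
    · rintro ⟨b, hb⟩
      refine ⟨hshape, hwf, ?_, ?_⟩
      · rintro ⟨-, ht⟩
        rw [DSeq_singleton, hat_tt] at ht
        exact hnbot (ht trivial)
      · rintro ⟨-, hc⟩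
        rw [DSeq_singleton, hat_ff] at hc
        exact hc (by rw [hhat]; exact hb)
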